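/- Let Γ be a preGarside trickle graph. Then the preGarside trickle monoid Tr⁺(Γ) is a Garside monoid if and only if V(Γ) is finite and Γ is a complete graph. -/

import Mathlib

open scoped Classical

universe u

namespace SimpleGraph

/-- `y` belongs to the star of `x` in `G` (i.e. `y = x` or `y` is a neighbour of `x`). -/
def InStar {V : Type u} (G : SimpleGraph V) (x y : V) : Prop := y = x ∨ G.Adj x y

end SimpleGraph

/-- A **trickle graph**: a simplicial graph together with a partial order on the vertices,
a vertex labeling `mu` with values in `ℕ≥2 ∪ {∞}`, and, for every vertex `x`, an automorphism
`phi x` of the star of `x` (encoded as a permutation of the whole vertex set fixing every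
vertex outside of the star of `x`), subject to conditions (a)–(g) of Bellingeri–Chemin–Paris. -/
structure TrickleGraph (V : Type u) [PartialOrder V] where
  /-- the underlying simplicial graph -/
  graph : SimpleGraph V
  /-- the vertex labeling, with `⊤` playing the role of `∞` -/
  mu : V → ℕ∞
  /-- the automorphism of the star of each vertex, extended by the identity -/
  phi : V → Equiv.Perm V
  two_le_mu : ∀ x : V, 2 ≤ mu x
  /-- condition (a) -/
  adj_of_lt : ∀ x y : V, x < y → graph.Adj x y
  /-- `phi x` is supported on the star of `x` -/
  phi_apply_of_not_inStar : ∀ x y : V, ¬ graph.InStar x y → phi x y = y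
  /-- `phi x` maps the star of `x` to itself -/
  inStar_phi : ∀ x y : V, graph.InStar x y → graph.InStar x (phi x y)
  /-- `phi x` is a graph automorphism of the (full subgraph spanned by the) star of `x` -/
  adj_phi_iff : ∀ x y z : V, graph.InStar x y → graph.InStar x z →
      (graph.Adj (phi x y) (phi x z) ↔ graph.Adj y z)
  /-- condition (b) -/
  adj_incomp : ∀ x y z : V, graph.Adj x y → ¬ x ≤ y → ¬ y ≤ x → z ≤ y →
      graph.Adj x z ∧ ¬ x ≤ z ∧ ¬ z ≤ x
  /-- condition (c) -/
  le_phi_iff : ∀ x y z : V, graph.InStar x y → graph.InStar x z →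
      (phi x z ≤ phi x y ↔ z ≤ y)
  /-- condition (d) -/
  lt_of_phi_ne : ∀ x y : V, graph.InStar x y → phi x y ≠ y → y < x
  /-- condition (e): if `mu x` is finite then the order of `phi x` divides `mu x` -/
  phi_pow_mu : ∀ x : V, phi x ^ WithTop.untopD 0 (mu x) = 1
  /-- condition (f) -/
  mu_phi : ∀ x y : V, graph.InStar x y → mu (phi x y) = mu y
  /-- condition (g) -/
  phi_phi : ∀ x y z : V, z < y → y < x →
      phi x (phi y z) = phi (phi x y) (phi x z)

namespace TrickleGraph

variable {V : Type u} [PartialOrder V]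

/-- The set of defining relators of the trickle group: `x ^ (mu x)` whenever `mu x ≠ ∞`, and
`phi_x(y) · x · (phi_y(x) · y)⁻¹` for every edge `{x, y}`. -/
def rels (T : TrickleGraph V) : Set (FreeGroup V) :=
  {r | ∃ (x : V) (n : ℕ), T.mu x = (n : ℕ∞) ∧ r = FreeGroup.of x ^ n} ∪
  {r | ∃ x y : V, T.graph.Adj x y ∧
      r = FreeGroup.of (T.phi x y) * FreeGroup.of x *
          (FreeGroup.of (T.phi y x) * FreeGroup.of y)⁻¹}

end TrickleGraph

/-- The **trickle group** of a trickle graph. -/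
abbrev TrickleGroup {V : Type u} [PartialOrder V] (T : TrickleGraph V) : Type u :=
  PresentedGroup T.rels

namespace TrickleGraph

variable {V : Type u} [PartialOrder V]

/-- The image of a vertex in the trickle group. -/
def gen (T : TrickleGraph V) (x : V) : TrickleGroup T := PresentedGroup.of x

/-- `mu` converted to a natural number, with `∞` mapped to `0` (so that `ZMod (T.muNat x)`
is the group `ℤ_{mu x}` of the paper, `ZMod 0 = ℤ` corresponding to `mu x = ∞`). -/
def muNat (T : TrickleGraph V) (x : V) : ℕ := WithTop.untopD 0 (T.mu x)

/-- The power `phi_x^a` for an exponent `a ∈ ℤ_{mu x}`; it is well defined on representatives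
by condition (e). -/
def phiPow (T : TrickleGraph V) (x : V) (a : ZMod (T.muNat x)) : Equiv.Perm V :=
  T.phi x ^ (ZMod.cast a : ℤ)

theorem mu_phi_apply (T : TrickleGraph V) (x y : V) : T.mu (T.phi x y) = T.mu y := by
  by_cases h : T.graph.InStar x y
  · exact T.mu_phi x y h
  · rw [T.phi_apply_of_not_inStar x y h]

theorem mu_phi_zpow (T : TrickleGraph V) (x : V) :
    ∀ (n : ℤ) (y : V), T.mu ((T.phi x ^ n) y) = T.mu y := by
  have hinv : ∀ y : V, T.mu ((T.phi x)⁻¹ y) = T.mu y := by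
    intro y
    conv_rhs => rw [← Equiv.apply_symm_apply (T.phi x) y]
    exact (T.mu_phi_apply x ((T.phi x)⁻¹ y)).symm
  intro n
  induction n using Int.induction_on with
  | zero => intro y; simp
  | succ k ih =>
      intro y
      have h : (T.phi x ^ ((k : ℤ) + 1)) y = (T.phi x ^ (k : ℤ)) (T.phi x y) := by
        rw [zpow_add_one]; rfl
      rw [h, ih (T.phi x y), T.mu_phi_apply]
  | pred k ih =>
      intro y
      have h : (T.phi x ^ (-(k : ℤ) - 1)) y = (T.phi x ^ (-(k : ℤ))) ((T.phi x)⁻¹ y) := by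
        rw [zpow_sub_one]; rfl
      rw [h, ih ((T.phi x)⁻¹ y), hinv]

theorem mu_phiPow (T : TrickleGraph V) (x : V) (a : ZMod (T.muNat x)) (y : V) :
    T.mu ((T.phiPow x a) y) = T.mu y :=
  T.mu_phi_zpow x _ y

theorem muNat_phiPow (T : TrickleGraph V) (x : V) (a : ZMod (T.muNat x)) (y : V) :
    T.muNat ((T.phiPow x a) y) = T.muNat y :=
  congrArg (fun m : ℕ∞ => WithTop.untopD 0 m) (T.mu_phiPow x a y)

end TrickleGraph

/-- Transport of a `ZMod` element along an equality of moduli. -/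
def zmodCongr {m k : ℕ} (h : m = k) (a : ZMod m) : ZMod k := by subst h; exact a

theorem zmodCongr_ne_zero {m k : ℕ} (h : m = k) {a : ZMod m} (ha : a ≠ 0) :
    zmodCongr h a ≠ 0 := by subst h; exact ha

/-- A **syllable** `x^a`, where `x` is a vertex and `a ∈ ℤ_{mu x} \ {0}`. -/
def Syllable {V : Type u} [PartialOrder V] (T : TrickleGraph V) : Type u :=
  Σ x : V, {a : ZMod (T.muNat x) // a ≠ 0}

namespace Syllable

variable {V : Type u} [PartialOrder V] {T : TrickleGraph V}

/-- The element of the trickle group represented by a syllable. -/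
def elm (s : Syllable T) : TrickleGroup T :=
  (PresentedGroup.of s.1 : TrickleGroup T) ^ (ZMod.cast s.2.val : ℤ)

end Syllable

/-- Syllabic words. -/
abbrev SylWord {V : Type u} [PartialOrder V] (T : TrickleGraph V) := List (Syllable T)

/-- The element of the trickle group represented by a syllabic word. -/
def SylWord.eval {V : Type u} [PartialOrder V] {T : TrickleGraph V} (w : SylWord T) :
    TrickleGroup T :=
  (w.map Syllable.elm).prod

/-- The defining relations of the **preGarside trickle monoid** `Tr⁺(Γ)`:
`phi_x(y) · x = phi_y(x) · y` for every edge `{x, y}`. -/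
def TrickleGraph.monRels {V : Type u} [PartialOrder V] (T : TrickleGraph V) :
    FreeMonoid V → FreeMonoid V → Prop := fun u v =>
  ∃ x y : V, T.graph.Adj x y ∧
    u = FreeMonoid.of (T.phi x y) * FreeMonoid.of x ∧
    v = FreeMonoid.of (T.phi y x) * FreeMonoid.of y

/-- The **preGarside trickle monoid** `Tr⁺(Γ)` of a (preGarside) trickle graph. -/
abbrev TrickleMonoid {V : Type u} [PartialOrder V] (T : TrickleGraph V) : Type u :=
  PresentedMonoid T.monRels

section PreGarside

variable {M : Type*} [Monoid M]

/-- Left divisibility: `a ≤_L b` iff `a c = b` for some `c`. -/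
def DvdL (a b : M) : Prop := ∃ c, a * c = b

/-- Right divisibility: `a ≤_R b` iff `c a = b` for some `c`. -/
def DvdR (a b : M) : Prop := ∃ c, c * a = b

/-- `m` is the least common upper bound of `a` and `b` for left divisibility. -/
def IsLcmL (a b m : M) : Prop :=
  (DvdL a m ∧ DvdL b m) ∧ ∀ c, DvdL a c → DvdL b c → DvdL m c

/-- `m` is the least common upper bound of `a` and `b` for right divisibility. -/
def IsLcmR (a b m : M) : Prop :=
  (DvdR a m ∧ DvdR b m) ∧ ∀ c, DvdR a c → DvdR b c → DvdR m c

/-- A **preGarside monoid**: a cancellative atomic monoid in which any two elements admitting a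
common upper bound for left (resp. right) divisibility admit a least one. -/
def IsPreGarsideMonoid (M : Type*) [Monoid M] : Prop :=
  (∀ a b c d : M, c * a * d = c * b * d → a = b) ∧
  (∃ ν : M → ℕ, (∀ a : M, ν a = 0 ↔ a = 1) ∧ ∀ a b : M, ν a + ν b ≤ ν (a * b)) ∧
  (∀ a b : M, (∃ c, DvdL a c ∧ DvdL b c) → ∃ m, IsLcmL a b m) ∧
  (∀ a b : M, (∃ c, DvdR a c ∧ DvdR b c) → ∃ m, IsLcmR a b m)

/-- A **Garside element**: a balanced element whose set of divisors generates the monoid. -/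
def IsGarsideElement (Δ : M) : Prop :=
  {a : M | DvdL a Δ} = {a : M | DvdR a Δ} ∧ Submonoid.closure {a : M | DvdL a Δ} = ⊤

/-- A **Garside monoid**: a preGarside monoid containing a Garside element. -/
def IsGarsideMonoid (M : Type*) [Monoid M] : Prop :=
  IsPreGarsideMonoid M ∧ ∃ Δ : M, IsGarsideElement Δ

/-- A **special** submonoid: closed under taking factors. -/
def Submonoid.IsSpecial (N : Submonoid M) : Prop := ∀ a b : M, a * b ∈ N → a ∈ N ∧ b ∈ N

/-- A **parabolic submonoid** of a (preGarside) monoid: a special submonoid closed under the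
least common upper bounds `∨_L` and `∨_R` whenever they exist. -/
def Submonoid.IsParabolic (N : Submonoid M) : Prop :=
  N.IsSpecial ∧
  (∀ a b m : M, a ∈ N → b ∈ N → IsLcmL a b m → m ∈ N) ∧
  (∀ a b m : M, a ∈ N → b ∈ N → IsLcmR a b m → m ∈ N)

end PreGarside

/-- Relators defining the **enveloping group** of a monoid `M`: the enveloping group is
generated by the elements of `M` subject to the relations `of (a b) = of a · of b`. -/
def envRels (M : Type u) [Monoid M] : Set (FreeGroup M) :=
  {r | ∃ a b : M, r = FreeGroup.of (a * b) * (FreeGroup.of a * FreeGroup.of b)⁻¹}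

/-- The **enveloping group** `G(M)` of a monoid `M`. -/
abbrev EnvGroup (M : Type u) [Monoid M] : Type u := PresentedGroup (envRels M)

/-- The natural map `M → G(M)`. -/
def envOf (M : Type u) [Monoid M] (a : M) : EnvGroup M := PresentedGroup.of a

theorem Equiv.Perm.apply_inv_self {α : Type*} (f : Equiv.Perm α) (x : α) : f (f⁻¹ x) = x :=
  Equiv.apply_symm_apply f x

theorem Equiv.Perm.inv_apply_self {α : Type*} (f : Equiv.Perm α) (x : α) : f⁻¹ (f x) = x :=
  Equiv.symm_apply_apply f x

namespace TrickleGraph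

variable {V : Type u} [PartialOrder V] (T : TrickleGraph V)

theorem inStar_self (x : V) : T.graph.InStar x x := Or.inl rfl

theorem inStar_of_adj {x y : V} (h : T.graph.Adj x y) : T.graph.InStar x y := Or.inr h

theorem inStar_of_lt {x y : V} (h : y < x) : T.graph.InStar x y :=
  Or.inr (T.adj_of_lt y x h).symm

theorem inStar_of_lt' {x y : V} (h : x < y) : T.graph.InStar x y :=
  Or.inr (T.adj_of_lt x y h)

theorem phi_self (x : V) : T.phi x x = x := by
  by_contra h
  exact lt_irrefl x (T.lt_of_phi_ne x x (T.inStar_self x) h)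

theorem phi_apply_of_not_lt {x y : V} (h : ¬ y < x) : T.phi x y = y := by
  by_cases hs : T.graph.InStar x y
  · by_contra hne
    exact h (T.lt_of_phi_ne x y hs hne)
  · exact T.phi_apply_of_not_inStar x y hs

theorem inStar_phi_inv {x y : V} (h : T.graph.InStar x y) :
    T.graph.InStar x ((T.phi x)⁻¹ y) := by
  by_contra hs
  have h1 : T.phi x ((T.phi x)⁻¹ y) = (T.phi x)⁻¹ y :=
    T.phi_apply_of_not_inStar x _ hs
  rw [Equiv.Perm.apply_inv_self] at h1
  rw [← h1] at hs
  exact hs h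

theorem le_phi_iff' {x y z : V} (hy : T.graph.InStar x y) (hz : T.graph.InStar x z) :
    T.phi x z ≤ T.phi x y ↔ z ≤ y := T.le_phi_iff x y z hy hz

theorem lt_phi_iff {x y z : V} (hy : T.graph.InStar x y) (hz : T.graph.InStar x z) :
    T.phi x z < T.phi x y ↔ z < y := by
  rw [lt_iff_le_not_ge, lt_iff_le_not_ge, T.le_phi_iff x y z hy hz, T.le_phi_iff x z y hz hy]

theorem phi_lt_x_iff {x y : V} (hy : T.graph.InStar x y) :
    T.phi x y < x ↔ y < x := by
  have h := T.lt_phi_iff (T.inStar_self x) hy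
  rwa [T.phi_self x] at h

theorem phi_inv_apply_of_not_lt {x y : V} (h : ¬ y < x) : (T.phi x)⁻¹ y = y := by
  by_contra hne
  have hs : T.graph.InStar x ((T.phi x)⁻¹ y) := by
    by_contra hs
    have h1 := T.phi_apply_of_not_inStar x _ hs
    rw [Equiv.Perm.apply_inv_self] at h1
    rw [← h1] at hne
    exact hne rfl
  have h2 : (T.phi x)⁻¹ y < x := by
    have := T.lt_of_phi_ne x _ hs ?_
    · exact this
    · rw [Equiv.Perm.apply_inv_self]
      exact fun hh => hne hh.symm
  have h3 : y < x := by
    have := (T.phi_lt_x_iff hs).2 h2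
    rwa [Equiv.Perm.apply_inv_self] at this
  exact h h3

theorem phi_inv_lt_x_iff {x y : V} (hy : T.graph.InStar x y) :
    (T.phi x)⁻¹ y < x ↔ y < x := by
  have hs := T.inStar_phi_inv hy
  conv_rhs => rw [← Equiv.Perm.apply_inv_self (T.phi x) y]
  exact (T.phi_lt_x_iff hs).symm

theorem adj_phi_inv_iff {x y z : V} (hy : T.graph.InStar x y) (hz : T.graph.InStar x z) :
    T.graph.Adj ((T.phi x)⁻¹ y) ((T.phi x)⁻¹ z) ↔ T.graph.Adj y z := by
  have := T.adj_phi_iff x ((T.phi x)⁻¹ y) ((T.phi x)⁻¹ z)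
    (T.inStar_phi_inv hy) (T.inStar_phi_inv hz)
  simp only [Equiv.Perm.apply_inv_self] at this
  exact this.symm

theorem le_phi_inv_iff {x y z : V} (hy : T.graph.InStar x y) (hz : T.graph.InStar x z) :
    (T.phi x)⁻¹ z ≤ (T.phi x)⁻¹ y ↔ z ≤ y := by
  have := T.le_phi_iff x ((T.phi x)⁻¹ y) ((T.phi x)⁻¹ z)
    (T.inStar_phi_inv hy) (T.inStar_phi_inv hz)
  simp only [Equiv.Perm.apply_inv_self] at this
  exact this.symm

end TrickleGraph
namespace TrickleGraph

variable {V : Type u} [PartialOrder V] (T : TrickleGraph V)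

/-- Condition (b), convenient form: if `x` and `z` are adjacent and incomparable, then
nothing `≤ z` is `< x` (nor `> x`). -/
theorem not_lt_of_incomp_adj {x z w : V} (hadj : T.graph.Adj x z) (h1 : ¬ x ≤ z)
    (h2 : ¬ z ≤ x) (hw : w ≤ z) : ¬ w < x ∧ ¬ x < w := by
  obtain ⟨-, h3, h4⟩ := T.adj_incomp x z w hadj h1 h2 hw
  exact ⟨fun h => h4 h.le, fun h => h3 h.le⟩

/-- Global version of condition (g): for `y < x` it holds as an identity of permutations. -/
theorem phi_phi' {x y : V} (h : y < x) (w : V) :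
    T.phi x (T.phi y w) = T.phi (T.phi x y) (T.phi x w) := by
  by_cases hw : w < y
  · exact T.phi_phi x y w hw h
  · rw [T.phi_apply_of_not_lt hw]
    have hxy : T.phi x y < x := (T.phi_lt_x_iff (T.inStar_of_lt h)).2 h
    have hfix : ¬ T.phi x w < T.phi x y := by
      intro hc
      by_cases hws : T.graph.InStar x w
      · exact hw ((T.lt_phi_iff (T.inStar_of_lt h) hws).1 hc)
      · rw [T.phi_apply_of_not_inStar x w hws] at hc
        exact hws (T.inStar_of_lt (hc.trans hxy))
    rw [T.phi_apply_of_not_lt hfix]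

/-- `phi x` and `phi z` commute when `x` and `z` are adjacent and incomparable. -/
theorem phi_comm_incomp {x z : V} (hadj : T.graph.Adj x z) (h1 : ¬ x ≤ z) (h2 : ¬ z ≤ x)
    (w : V) : T.phi x (T.phi z w) = T.phi z (T.phi x w) := by
  by_cases hwz : w < z
  · have hfix1 : T.phi x w = w :=
      T.phi_apply_of_not_lt (T.not_lt_of_incomp_adj hadj h1 h2 hwz.le).1
    have hzw : T.phi z w < z := (T.phi_lt_x_iff (T.inStar_of_lt hwz)).2 hwz
    have hfix2 : T.phi x (T.phi z w) = T.phi z w :=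
      T.phi_apply_of_not_lt (T.not_lt_of_incomp_adj hadj h1 h2 hzw.le).1
    rw [hfix1, hfix2]
  · rw [T.phi_apply_of_not_lt hwz]
    have : ¬ T.phi x w < z := by
      by_cases hwx : w < x
      · intro hc
        have hxw : T.phi x w < x := (T.phi_lt_x_iff (T.inStar_of_lt hwx)).2 hwx
        exact (T.not_lt_of_incomp_adj hadj h1 h2 hc.le).1 hxw
      · rw [T.phi_apply_of_not_lt hwx]; exact hwz
    rw [T.phi_apply_of_not_lt this]

/-- For `y < x`, conjugation of `phi y` by `phi x` equals `phi (phi x y)`. -/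
theorem phi_mul_eq {x y : V} (h : y < x) :
    T.phi x * T.phi y = T.phi (T.phi x y) * T.phi x := by
  ext w
  exact T.phi_phi' h w

/-- The letter `ρ(x, y) = φ_x⁻¹(y)`. -/
def rho (x y : V) : V := (T.phi x)⁻¹ y

theorem rho_self (x : V) : T.rho x x = x := T.phi_inv_apply_of_not_lt (lt_irrefl x)

theorem phi_rho (x y : V) : T.phi x (T.rho x y) = y := Equiv.Perm.apply_inv_self _ _

theorem rho_injective (x : V) : Function.Injective (T.rho x) := by
  intro a b hab
  have : T.phi x (T.rho x a) = T.phi x (T.rho x b) := by rw [hab]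
  rwa [T.phi_rho, T.phi_rho] at this

theorem adj_rho {x y : V} (h : T.graph.Adj x y) : T.graph.Adj x (T.rho x y) := by
  have := (T.adj_phi_inv_iff (T.inStar_self x) (T.inStar_of_adj h)).2 h
  rwa [T.phi_inv_apply_of_not_lt (lt_irrefl x)] at this

theorem rho_ne {x y : V} (h : y ≠ x) : T.rho x y ≠ x := by
  intro hc
  have : T.phi x (T.rho x y) = T.phi x x := by rw [hc]
  rw [T.phi_rho, T.phi_self] at this
  exact h this

theorem adj_rho_rho {x y z : V} (hy : T.graph.InStar x y) (hz : T.graph.InStar x z) :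
    T.graph.Adj (T.rho x y) (T.rho x z) ↔ T.graph.Adj y z :=
  T.adj_phi_inv_iff hy hz

theorem rho_lt_iff {x y : V} (hy : T.graph.InStar x y) : T.rho x y < x ↔ y < x :=
  T.phi_inv_lt_x_iff hy

/-- The Ψ-lemma: for adjacent `x` and `z`, `φ_x ∘ φ_{ρ(x,z)} = φ_z ∘ φ_{ρ(z,x)}`. -/
theorem psi {x z : V} (hadj : T.graph.Adj x z) :
    T.phi x * T.phi (T.rho x z) = T.phi z * T.phi (T.rho z x) := by
  by_cases h1 : x ≤ z
  · have hlt : x < z := lt_of_le_of_ne h1 hadj.ne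
    have e1 : T.rho x z = z := T.phi_inv_apply_of_not_lt (asymm hlt)
    have e2 : T.rho z x < z := (T.rho_lt_iff (T.inStar_of_lt hlt)).2 hlt
    have e3 : T.phi z (T.rho z x) = x := T.phi_rho z x
    rw [e1, ← e3, ← T.phi_mul_eq e2, e3]
  · by_cases h2 : z ≤ x
    · have hlt : z < x := lt_of_le_of_ne h2 (hadj.ne' )
      have e1 : T.rho z x = x := T.phi_inv_apply_of_not_lt (asymm hlt)
      have e2 : T.rho x z < x := (T.rho_lt_iff (T.inStar_of_lt hlt)).2 hlt
      have e3 : T.phi x (T.rho x z) = z := T.phi_rho x z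
      rw [e1, T.phi_mul_eq e2, e3]
    · have e1 : T.rho x z = z := T.phi_inv_apply_of_not_lt
        (fun hc => h2 hc.le)
      have e2 : T.rho z x = x := T.phi_inv_apply_of_not_lt
        (fun hc => h1 hc.le)
      rw [e1, e2]
      ext w
      exact T.phi_comm_incomp hadj h1 h2 w

/-- The cube identity (★). -/
theorem rho_star {x z : V} (hadj : T.graph.Adj x z) (y : V) :
    T.rho (T.rho x z) (T.rho x y) = T.rho (T.rho z x) (T.rho z y) := by
  have h := congrArg Inv.inv (T.psi hadj)
  rw [mul_inv_rev, mul_inv_rev] at h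
  exact congrFun (congrArg (fun (e : Equiv.Perm V) (w : V) => e w) h) y

end TrickleGraph
namespace TrickleGraph

variable {V : Type u} [PartialOrder V] (T : TrickleGraph V)

theorem lt_rho_iff {x y : V} (hy : T.graph.InStar x y) : x < T.rho x y ↔ x < y := by
  have h1 : x ≤ T.rho x y ↔ x ≤ y := by
    have := T.le_phi_inv_iff hy (T.inStar_self x)
    rwa [T.phi_inv_apply_of_not_lt (lt_irrefl x)] at this
  have h2 : T.rho x y ≤ x ↔ y ≤ x := by
    have := T.le_phi_inv_iff (T.inStar_self x) hy
    rwa [T.phi_inv_apply_of_not_lt (lt_irrefl x)] at this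
  rw [lt_iff_le_not_ge, lt_iff_le_not_ge, h1, h2]

theorem phi_phi_self {x y : V} (hadj : T.graph.Adj x y) :
    T.phi (T.phi x y) x = T.phi y x := by
  by_cases h : y < x
  · have h1 : ¬ x < y := asymm h
    rw [T.phi_apply_of_not_lt h1]
    apply T.phi_apply_of_not_lt
    intro hc
    exact (lt_irrefl x) (hc.trans ((T.phi_lt_x_iff (T.inStar_of_lt h)).2 h))
  · rw [T.phi_apply_of_not_lt h]

theorem adj_phi_phi {x y : V} (hadj : T.graph.Adj x y) :
    T.graph.Adj (T.phi x y) (T.phi y x) := by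
  by_cases h : y < x
  · have h1 : ¬ x < y := asymm h
    rw [T.phi_apply_of_not_lt h1]
    have := (T.adj_phi_iff x y x (T.inStar_of_adj hadj) (T.inStar_self x)).2 hadj.symm
    rwa [T.phi_self] at this
  · rw [T.phi_apply_of_not_lt h]
    have := (T.adj_phi_iff y x y (T.inStar_of_adj hadj.symm) (T.inStar_self y)).2 hadj
    rw [T.phi_self] at this
    exact this.symm

theorem rho_phi_phi {x y : V} (hadj : T.graph.Adj x y) :
    T.rho (T.phi x y) (T.phi y x) = x := by
  have h := T.phi_phi_self hadj
  unfold rho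
  rw [← h, Equiv.Perm.inv_apply_self]

/-- The elementary rewriting step on words. -/
def StepL : List V → List V → Prop := fun u v =>
  ∃ (s t : List V) (p q : V), T.graph.Adj p q ∧
    u = s ++ p :: T.rho p q :: t ∧ v = s ++ q :: T.rho q p :: t

theorem stepL_symm {u v : List V} (h : T.StepL u v) : T.StepL v u := by
  obtain ⟨s, t, p, q, hadj, hu, hv⟩ := h
  exact ⟨s, t, q, p, hadj.symm, hv, hu⟩

theorem stepL_length {u v : List V} (h : T.StepL u v) : u.length = v.length := by
  obtain ⟨s, t, p, q, hadj, hu, hv⟩ := h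
  subst hu; subst hv; simp

theorem stepL_append_left {u v : List V} (w : List V) (h : T.StepL u v) :
    T.StepL (w ++ u) (w ++ v) := by
  obtain ⟨s, t, p, q, hadj, hu, hv⟩ := h
  exact ⟨w ++ s, t, p, q, hadj, by simp [hu], by simp [hv]⟩

theorem stepL_append_right {u v : List V} (w : List V) (h : T.StepL u v) :
    T.StepL (u ++ w) (v ++ w) := by
  obtain ⟨s, t, p, q, hadj, hu, hv⟩ := h
  exact ⟨s, t ++ w, p, q, hadj, by simp [hu], by simp [hv]⟩

/-- Words of the trickle monoid. -/
def mkW : List V → TrickleMonoid T := fun l => PresentedMonoid.mk T.monRels (FreeMonoid.ofList l)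

theorem mkW_append (u v : List V) : T.mkW (u ++ v) = T.mkW u * T.mkW v := by
  unfold mkW
  rw [FreeMonoid.ofList_append, map_mul]

theorem mkW_nil : T.mkW [] = 1 := rfl

/-- Uniform form of the defining relations. -/
theorem monRels_eq {u v : FreeMonoid V} (h : T.monRels u v) :
    ∃ p q : V, T.graph.Adj p q ∧ u = FreeMonoid.ofList [p, T.rho p q] ∧
      v = FreeMonoid.ofList [q, T.rho q p] := by
  obtain ⟨x, y, hadj, hu, hv⟩ := h
  refine ⟨T.phi x y, T.phi y x, T.adj_phi_phi hadj, ?_, ?_⟩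
  · rw [hu, T.rho_phi_phi hadj]; rfl
  · rw [hv, T.rho_phi_phi hadj.symm]; rfl

/-- Conversely, each adjacent pair gives a defining relation. -/
theorem monRels_of_adj {p q : V} (hadj : T.graph.Adj p q) (hnlt : ¬ p < q) :
    T.monRels (FreeMonoid.ofList [p, T.rho p q]) (FreeMonoid.ofList [q, T.rho q p]) := by
  refine ⟨T.rho p q, p, (T.adj_rho hadj).symm, ?_, ?_⟩
  · have h1 : T.phi (T.rho p q) p = p := by
      apply T.phi_apply_of_not_lt
      rw [T.lt_rho_iff (T.inStar_of_adj hadj)]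
      exact hnlt
    rw [h1]; rfl
  · have h2 : T.phi p (T.rho p q) = q := T.phi_rho p q
    have h3 : T.rho q p = p := T.phi_inv_apply_of_not_lt hnlt
    rw [h2, h3]; rfl

theorem conGen_pair {p q : V} (hadj : T.graph.Adj p q) :
    conGen T.monRels (FreeMonoid.ofList [p, T.rho p q]) (FreeMonoid.ofList [q, T.rho q p]) := by
  by_cases h : p < q
  · exact (ConGen.Rel.of _ _ (T.monRels_of_adj hadj.symm (asymm h))).symm
  · exact ConGen.Rel.of _ _ (T.monRels_of_adj hadj h)

theorem eqvGen_stepL_append_right {u v : List V} (h : Relation.EqvGen T.StepL u v)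
    (w : List V) : Relation.EqvGen T.StepL (u ++ w) (v ++ w) := by
  induction h with
  | rel a b hab => exact Relation.EqvGen.rel _ _ (T.stepL_append_right w hab)
  | refl a => exact Relation.EqvGen.refl _
  | symm a b _ ih => exact ih.symm _ _
  | trans a b c _ _ ih1 ih2 => exact ih1.trans _ _ _ ih2

theorem eqvGen_stepL_append_left {u v : List V} (h : Relation.EqvGen T.StepL u v)
    (w : List V) : Relation.EqvGen T.StepL (w ++ u) (w ++ v) := by
  induction h with
  | rel a b hab => exact Relation.EqvGen.rel _ _ (T.stepL_append_left w hab)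
  | refl a => exact Relation.EqvGen.refl _
  | symm a b _ ih => exact ih.symm _ _
  | trans a b c _ _ ih1 ih2 => exact ih1.trans _ _ _ ih2

/-- The congruence generated by the trickle relations, as an equivalence of words. -/
theorem conGen_iff_eqvGen {u v : List V} :
    conGen T.monRels (FreeMonoid.ofList u) (FreeMonoid.ofList v) ↔
      Relation.EqvGen T.StepL u v := by
  constructor
  · intro h
    let c : Con (FreeMonoid V) :=
      { r := fun a b => Relation.EqvGen T.StepL (FreeMonoid.toList a) (FreeMonoid.toList b)
        iseqv := ⟨fun _ => Relation.EqvGen.refl _, fun h => h.symm _ _,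
          fun h1 h2 => h1.trans _ _ _ h2⟩
        mul' := by
          intro a b c' d h1 h2
          have e1 := T.eqvGen_stepL_append_right h1 (FreeMonoid.toList c')
          have e2 := T.eqvGen_stepL_append_left h2 (FreeMonoid.toList b)
          exact (e1.trans _ _ _ e2) }
    have hle : conGen T.monRels ≤ c := by
      apply Con.conGen_le.2
      intro a b hab
      obtain ⟨p, q, hadj, ha, hb⟩ := T.monRels_eq hab
      show Relation.EqvGen T.StepL _ _
      rw [ha, hb]
      exact Relation.EqvGen.rel _ _ ⟨[], [], p, q, hadj, rfl, rfl⟩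
    exact hle h
  · intro h
    induction h with
    | rel a b hab =>
      obtain ⟨s, t, p, q, hadj, ha, hb⟩ := hab
      subst ha; subst hb
      have h1 : conGen T.monRels (FreeMonoid.ofList [p, T.rho p q])
          (FreeMonoid.ofList [q, T.rho q p]) := T.conGen_pair hadj
      have h2 := Con.mul (conGen T.monRels)
        (Con.mul (conGen T.monRels) ((conGen T.monRels).refl (FreeMonoid.ofList s)) h1)
        ((conGen T.monRels).refl (FreeMonoid.ofList t))
      simpa [FreeMonoid.ofList_append, FreeMonoid.ofList_cons, FreeMonoid.ofList_nil, mul_assoc, mul_one] using h2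
    | refl a => exact (conGen T.monRels).refl _
    | symm a b _ ih => exact (conGen T.monRels).symm ih
    | trans a b c _ _ ih1 ih2 => exact (conGen T.monRels).trans ih1 ih2

theorem reflTransGen_of_eqvGen {u v : List V} (h : Relation.EqvGen T.StepL u v) :
    Relation.ReflTransGen T.StepL u v := by
  induction h with
  | rel a b hab => exact Relation.ReflTransGen.single hab
  | refl a => exact Relation.ReflTransGen.refl
  | symm a b _ ih => exact (@Relation.ReflTransGen.stdSymm _ _ ⟨fun _ _ h => T.stepL_symm h⟩).symm _ _ ih
  | trans a b c _ _ ih1 ih2 => exact ih1.trans ih2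

theorem eqvGen_of_reflTransGen {u v : List V} (h : Relation.ReflTransGen T.StepL u v) :
    Relation.EqvGen T.StepL u v := by
  induction h with
  | refl => exact Relation.EqvGen.refl _
  | tail _ hbc ih => exact ih.trans _ _ _ (Relation.EqvGen.rel _ _ hbc)

/-- Main interface: equality in the trickle monoid is chain-equivalence of words. -/
theorem mkW_eq_iff {u v : List V} :
    T.mkW u = T.mkW v ↔ Relation.ReflTransGen T.StepL u v := by
  unfold mkW
  constructor
  · intro h
    apply T.reflTransGen_of_eqvGen
    rw [← T.conGen_iff_eqvGen]
    exact Quotient.exact h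
  · intro h
    have h1 : conGen T.monRels (FreeMonoid.ofList u) (FreeMonoid.ofList v) :=
      (T.conGen_iff_eqvGen).2 (T.eqvGen_of_reflTransGen h)
    exact Quotient.sound h1

end TrickleGraph
namespace TrickleGraph

variable {V : Type u} [PartialOrder V] (T : TrickleGraph V)

theorem mkW_cons_congr {u v : List V} (a : V) (h : T.mkW u = T.mkW v) :
    T.mkW (a :: u) = T.mkW (a :: v) := by
  have h1 : T.mkW ([a] ++ u) = T.mkW ([a] ++ v) := by
    rw [T.mkW_append, T.mkW_append, h]
  simpa using h1

theorem mkW_pair {p q : V} (hadj : T.graph.Adj p q) (r : List V) :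
    T.mkW (p :: T.rho p q :: r) = T.mkW (q :: T.rho q p :: r) :=
  T.mkW_eq_iff.2 (Relation.ReflTransGen.single ⟨[], r, p, q, hadj, rfl, rfl⟩)

theorem stepL_cons {x : V} {u w : List V} (h : T.StepL (x :: u) w) :
    (∃ u', w = x :: u' ∧ T.StepL u u') ∨
    (∃ q t, T.graph.Adj x q ∧ u = T.rho x q :: t ∧ w = q :: T.rho q x :: t) := by
  obtain ⟨s, t, p, q, hadj, hu, hv⟩ := h
  cases s with
  | nil =>
    simp only [List.nil_append] at hu hv
    right
    obtain ⟨hx, hu'⟩ := List.cons.injEq .. ▸ hu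
    exact ⟨q, t, hx ▸ hadj, by rw [hu', hx], by rw [hv, hx]⟩
  | cons a s' =>
    simp only [List.cons_append] at hu hv
    left
    obtain ⟨hx, hu'⟩ := List.cons.injEq .. ▸ hu
    refine ⟨s' ++ q :: T.rho q p :: t, by rw [hv, hx], ?_⟩
    exact ⟨s', t, p, q, hadj, hu', rfl⟩

/-- The Levi-type lemma for trickle monoids. -/
theorem levi : ∀ n : ℕ, ∀ x : V, ∀ u : List V, ∀ y : V, ∀ v : List V,
    (x :: u).length ≤ n → T.mkW (x :: u) = T.mkW (y :: v) →
    ((x = y → T.mkW u = T.mkW v) ∧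
     (x ≠ y → T.graph.Adj x y ∧ ∃ t : List V,
       T.mkW u = T.mkW (T.rho x y :: t) ∧ T.mkW v = T.mkW (T.rho y x :: t))) := by
  intro n
  induction n with
  | zero => intro x u y v hlen; simp at hlen
  | succ n ih =>
    intro x u y v hlen heq
    rw [T.mkW_eq_iff] at heq
    have main : ∀ a : List V, Relation.ReflTransGen T.StepL a (y :: v) →
        ∀ x u, a = x :: u → (x :: u).length ≤ n + 1 →
        ((x = y → T.mkW u = T.mkW v) ∧
         (x ≠ y → T.graph.Adj x y ∧ ∃ t : List V,
           T.mkW u = T.mkW (T.rho x y :: t) ∧ T.mkW v = T.mkW (T.rho y x :: t))) := by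
      intro a ha
      induction ha using Relation.ReflTransGen.head_induction_on with
      | refl =>
        intro x u hxu _
        obtain ⟨hx, hu⟩ := List.cons.injEq .. ▸ hxu.symm
        constructor
        · intro _; rw [hu]
        · intro hne; exact absurd hx hne
      | head hstep hchain ihP =>
        intro x u hxu hlen'
        subst hxu
        rcases T.stepL_cons hstep with ⟨u₁, rfl, hstep'⟩ | ⟨x₁, t', hadj, hut, hw⟩
        · -- step inside the tail
          have hlen₁ : (x :: u₁).length ≤ n + 1 := by
            simpa [T.stepL_length hstep'] using hlen'
          have huu₁ : T.mkW u = T.mkW u₁ :=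
            T.mkW_eq_iff.2 (Relation.ReflTransGen.single hstep')
          obtain ⟨h1, h2⟩ := ihP x u₁ rfl hlen₁
          constructor
          · intro hxy; rw [huu₁]; exact h1 hxy
          · intro hxy
            obtain ⟨hadj, t, e1, e2⟩ := h2 hxy
            exact ⟨hadj, t, huu₁.trans e1, e2⟩
        · -- step at the head
          subst hw
          have hx₁x : x₁ ≠ x := hadj.ne'
          have hlen₁ : (x₁ :: T.rho x₁ x :: t').length ≤ n + 1 := by
            rw [hut] at hlen'; simpa using hlen'
          obtain ⟨h1, h2⟩ := ihP x₁ (T.rho x₁ x :: t') rfl hlen₁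
          by_cases hq : x₁ = y
          · subst hq
            constructor
            · intro hxy; exact absurd hxy.symm hx₁x
            · intro _
              refine ⟨hadj, t', by rw [hut], (h1 rfl).symm⟩
          · obtain ⟨hadj₁, t₁, e1, e2⟩ := h2 hq
            -- apply the outer induction hypothesis to the shorter pair
            have hlen₂ : (T.rho x₁ x :: t').length ≤ n := by
              rw [hut] at hlen'; simpa using hlen'
            obtain ⟨g1, g2⟩ := ih (T.rho x₁ x) t' (T.rho x₁ y) t₁ hlen₂ e1
            have hsx : T.graph.InStar x₁ x := T.inStar_of_adj hadj.symm
            have hsy : T.graph.InStar x₁ y := T.inStar_of_adj hadj₁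
            by_cases hxy : x = y
            · subst hxy
              have g1' := g1 rfl
              constructor
              · intro _
                rw [hut]
                rw [e2]
                exact T.mkW_cons_congr _ g1'
              · intro hne; exact absurd rfl hne
            · have hne' : T.rho x₁ x ≠ T.rho x₁ y :=
                fun hc => hxy (T.rho_injective x₁ hc)
              obtain ⟨hadj', r, f1, f2⟩ := g2 hne'
              have hAdjxy : T.graph.Adj x y := (T.adj_rho_rho hsx hsy).1 hadj'
              have hsxx₁ : T.graph.InStar x x₁ := T.inStar_of_adj hadj
              have hsxy : T.graph.InStar x y := T.inStar_of_adj hAdjxy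
              have hsyx₁ : T.graph.InStar y x₁ := T.inStar_of_adj hadj₁.symm
              have hsyx : T.graph.InStar y x := T.inStar_of_adj hAdjxy.symm
              constructor
              · intro hc; exact absurd hc hxy
              · intro _
                refine ⟨hAdjxy, T.rho (T.rho x y) (T.rho x x₁) :: r, ?_, ?_⟩
                · -- u-side
                  rw [hut]
                  have s1 : T.mkW (T.rho x x₁ :: t') =
                      T.mkW (T.rho x x₁ :: T.rho (T.rho x₁ x) (T.rho x₁ y) :: r) :=
                    T.mkW_cons_congr _ f1
                  rw [s1, ← T.rho_star hadj y]
                  have hadjpq : T.graph.Adj (T.rho x x₁) (T.rho x y) :=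
                    (T.adj_rho_rho hsxx₁ hsxy).2 hadj₁
                  exact T.mkW_pair hadjpq r
                · -- v-side
                  rw [e2]
                  have s2 : T.mkW (T.rho y x₁ :: t₁) =
                      T.mkW (T.rho y x₁ :: T.rho (T.rho x₁ y) (T.rho x₁ x) :: r) :=
                    T.mkW_cons_congr _ f2
                  rw [s2, ← T.rho_star hadj₁.symm x]
                  have hadjpq : T.graph.Adj (T.rho y x₁) (T.rho y x) :=
                    (T.adj_rho_rho hsyx₁ hsyx).2 hadj.symm
                  rw [T.mkW_pair hadjpq r]
                  rw [T.rho_star hAdjxy x₁]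
    exact main _ heq x u rfl hlen

end TrickleGraph
namespace TrickleGraph

variable {V : Type u} [PartialOrder V] (T : TrickleGraph V)

/-- The length homomorphism. -/
noncomputable def lengthHom : TrickleMonoid T →* Multiplicative ℕ :=
  PresentedMonoid.lift (fun _ => Multiplicative.ofAdd 1) (by
    rintro a b ⟨x, y, hadj, ha, hb⟩
    subst ha; subst hb
    simp)

/-- The length of an element of the trickle monoid. -/
noncomputable def len (m : TrickleMonoid T) : ℕ := Multiplicative.toAdd (T.lengthHom m)

theorem len_mul (a b : TrickleMonoid T) : T.len (a * b) = T.len a + T.len b := by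
  unfold len
  rw [map_mul]
  rfl

theorem len_one : T.len 1 = 0 := by
  unfold len
  rw [map_one]
  rfl

theorem len_mkW (l : List V) : T.len (T.mkW l) = l.length := by
  induction l with
  | nil => exact T.len_one
  | cons a l ihl =>
    have : T.mkW (a :: l) = T.mkW [a] * T.mkW l := by
      simpa using T.mkW_append [a] l
    rw [this, T.len_mul, ihl]
    have h1 : T.len (T.mkW [a]) = 1 := by
      show Multiplicative.toAdd (T.lengthHom (PresentedMonoid.of T.monRels a)) = 1
      unfold lengthHom
      rw [PresentedMonoid.lift_of]
      rfl
    rw [h1, List.length_cons]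
    omega

theorem exists_word (m : TrickleMonoid T) : ∃ l : List V, m = T.mkW l := by
  obtain ⟨w, hw⟩ := PresentedMonoid.surjective_mk (rels := T.monRels) m
  exact ⟨FreeMonoid.toList w, by rw [← hw]; rfl⟩

theorem eq_one_of_len_eq_zero {m : TrickleMonoid T} (h : T.len m = 0) : m = 1 := by
  obtain ⟨l, rfl⟩ := T.exists_word m
  rw [T.len_mkW] at h
  rw [List.length_eq_zero_iff.1 h]
  rfl

theorem mkW_singleton_ne_one (x : V) : T.mkW [x] ≠ 1 := by
  intro h
  have := T.len_mkW [x]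
  rw [h, T.len_one] at this
  simp at this

/-- Monoid-level Levi lemma: cancellation of a common leading generator. -/
theorem cancel_gen {x : V} {b c : TrickleMonoid T} (h : T.mkW [x] * b = T.mkW [x] * c) :
    b = c := by
  obtain ⟨u, rfl⟩ := T.exists_word b
  obtain ⟨v, rfl⟩ := T.exists_word c
  have h1 : T.mkW (x :: u) = T.mkW (x :: v) := by
    have e1 : T.mkW (x :: u) = T.mkW [x] * T.mkW u := by simpa using T.mkW_append [x] u
    have e2 : T.mkW (x :: v) = T.mkW [x] * T.mkW v := by simpa using T.mkW_append [x] v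
    rw [e1, e2, h]
  exact (T.levi (x :: u).length x u x v le_rfl h1).1 rfl

/-- Left cancellativity. -/
theorem mul_left_cancel' (a b c : TrickleMonoid T) (h : a * b = a * c) : b = c := by
  obtain ⟨w, rfl⟩ := T.exists_word a
  induction w with
  | nil =>
    rw [T.mkW_nil, one_mul, one_mul] at h
    exact h
  | cons z w ihw =>
    have e : T.mkW (z :: w) = T.mkW [z] * T.mkW w := by simpa using T.mkW_append [z] w
    rw [e, mul_assoc, mul_assoc] at h
    exact ihw (T.cancel_gen h)

/-- Monoid-level Levi lemma, divisibility form. -/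
theorem levi_monoid {x y : V} (hne : x ≠ y) {c d : TrickleMonoid T}
    (h : T.mkW [x] * c = T.mkW [y] * d) :
    T.graph.Adj x y ∧ ∃ e : TrickleMonoid T,
      c = T.mkW [T.rho x y] * e ∧ d = T.mkW [T.rho y x] * e := by
  obtain ⟨u, rfl⟩ := T.exists_word c
  obtain ⟨v, rfl⟩ := T.exists_word d
  have h1 : T.mkW (x :: u) = T.mkW (y :: v) := by
    have e1 : T.mkW (x :: u) = T.mkW [x] * T.mkW u := by simpa using T.mkW_append [x] u
    have e2 : T.mkW (y :: v) = T.mkW [y] * T.mkW v := by simpa using T.mkW_append [y] v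
    rw [e1, e2, h]
  obtain ⟨hadj, t, e1, e2⟩ := (T.levi (x :: u).length x u y v le_rfl h1).2 hne
  refine ⟨hadj, T.mkW t, ?_, ?_⟩
  · rw [e1]; simpa using T.mkW_append [T.rho x y] t
  · rw [e2]; simpa using T.mkW_append [T.rho y x] t

theorem mkW_singleton_injective {x y : V} (h : T.mkW [x] = T.mkW [y]) : x = y := by
  by_contra hne
  have h1 : T.mkW [x] * 1 = T.mkW [y] * 1 := by rw [h]
  obtain ⟨hadj, e, he, -⟩ := T.levi_monoid hne h1
  have : T.len (1 : TrickleMonoid T) = T.len (T.mkW [T.rho x y] * e) := by rw [← he]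
  rw [T.len_one, T.len_mul] at this
  have h2 := T.len_mkW [T.rho x y]
  simp at h2
  omega

/-- The defining relation, monoid form. -/
theorem gen_pair_rel {p q : V} (hadj : T.graph.Adj p q) :
    T.mkW [p] * T.mkW [T.rho p q] = T.mkW [q] * T.mkW [T.rho q p] := by
  have := T.mkW_pair hadj []
  have e1 : T.mkW [p, T.rho p q] = T.mkW [p] * T.mkW [T.rho p q] := by
    simpa using T.mkW_append [p] [T.rho p q]
  have e2 : T.mkW [q, T.rho q p] = T.mkW [q] * T.mkW [T.rho q p] := by
    simpa using T.mkW_append [q] [T.rho q p]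
  rw [← e1, ← e2, this]

end TrickleGraph
namespace TrickleGraph

variable {V : Type u} [PartialOrder V] (T : TrickleGraph V)

/-- The opposite trickle graph (same graph and order, inverse twists). -/
def op (T : TrickleGraph V) : TrickleGraph V where
  graph := T.graph
  mu := T.mu
  phi := fun x => (T.phi x)⁻¹
  two_le_mu := T.two_le_mu
  adj_of_lt := T.adj_of_lt
  phi_apply_of_not_inStar := fun x y h =>
    T.phi_inv_apply_of_not_lt (fun hc => h (T.inStar_of_lt hc))
  inStar_phi := fun x y h => T.inStar_phi_inv h
  adj_phi_iff := fun x y z hy hz => T.adj_phi_inv_iff hy hz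
  adj_incomp := T.adj_incomp
  le_phi_iff := fun x y z hy hz => T.le_phi_inv_iff hy hz
  lt_of_phi_ne := by
    intro x y hs hne
    apply T.lt_of_phi_ne x y hs
    intro hc
    apply hne
    rw [← hc, Equiv.Perm.inv_apply_self]
    exact hc.symm
  phi_pow_mu := by
    intro x
    rw [inv_pow, T.phi_pow_mu x, inv_one]
  mu_phi := by
    intro x y hs
    have := T.mu_phi_zpow x (-1) y
    simpa using this
  phi_phi := by
    intro x y z hzy hyx
    have hy0 : (T.phi x)⁻¹ y < x := by
      rw [T.phi_inv_lt_x_iff (T.inStar_of_lt hyx)]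
      exact hyx
    have h := T.phi_mul_eq hy0
    rw [Equiv.Perm.apply_inv_self] at h
    have h2 : (T.phi ((T.phi x)⁻¹ y))⁻¹ * (T.phi x)⁻¹ = (T.phi x)⁻¹ * (T.phi y)⁻¹ := by
      have := congrArg Inv.inv h
      rw [mul_inv_rev, mul_inv_rev] at this
      exact this
    exact (congrFun (congrArg (fun (e : Equiv.Perm V) (w : V) => e w) h2.symm) z)

theorem op_rho (x y : V) : (T.op).rho x y = T.phi x y := by
  show ((T.phi x)⁻¹)⁻¹ y = T.phi x y
  rw [inv_inv]

theorem stepL_of_monRels {a b : V} (hadj : T.graph.Adj a b) (s t : List V) :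
    T.StepL (s ++ T.phi a b :: a :: t) (s ++ T.phi b a :: b :: t) := by
  refine ⟨s, t, T.phi a b, T.phi b a, T.adj_phi_phi hadj, ?_, ?_⟩
  · rw [T.rho_phi_phi hadj]
  · rw [T.rho_phi_phi hadj.symm]

theorem stepL_reverse {u v : List V} (h : T.StepL u v) :
    (T.op).StepL u.reverse v.reverse := by
  obtain ⟨s, t, p, q, hadj, hu, hv⟩ := h
  subst hu; subst hv
  have hadj' : (T.op).graph.Adj p q := hadj
  have e1 := (T.op).stepL_of_monRels hadj' t.reverse s.reverse
  rw [show (T.op).phi p q = T.rho p q from rfl, show (T.op).phi q p = T.rho q p from rfl] at e1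
  simpa [List.reverse_append] using e1

theorem stepL_reverse' {u v : List V} (h : (T.op).StepL u v) :
    T.StepL u.reverse v.reverse := by
  obtain ⟨s, t, p, q, hadj, hu, hv⟩ := h
  subst hu; subst hv
  have hadj' : T.graph.Adj p q := hadj
  have e1 := T.stepL_of_monRels hadj' t.reverse s.reverse
  rw [show T.phi p q = (T.op).rho p q from (T.op_rho p q).symm,
      show T.phi q p = (T.op).rho q p from (T.op_rho q p).symm] at e1
  simpa [List.reverse_append] using e1

theorem reflTransGen_reverse {u v : List V} (h : Relation.ReflTransGen T.StepL u v) :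
    Relation.ReflTransGen (T.op).StepL u.reverse v.reverse := by
  induction h with
  | refl => exact Relation.ReflTransGen.refl
  | tail _ hbc ih => exact ih.tail (T.stepL_reverse hbc)

theorem reflTransGen_reverse' {u v : List V} (h : Relation.ReflTransGen (T.op).StepL u v) :
    Relation.ReflTransGen T.StepL u.reverse v.reverse := by
  induction h with
  | refl => exact Relation.ReflTransGen.refl
  | tail _ hbc ih => exact ih.tail (T.stepL_reverse' hbc)

theorem mkW_reverse_iff {u v : List V} :
    T.mkW u = T.mkW v ↔ (T.op).mkW u.reverse = (T.op).mkW v.reverse := by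
  rw [T.mkW_eq_iff, (T.op).mkW_eq_iff]
  constructor
  · exact T.reflTransGen_reverse
  · intro h
    have h2 := T.reflTransGen_reverse' h
    simpa using h2

/-- Right cancellativity. -/
theorem mul_right_cancel' (a b c : TrickleMonoid T) (h : b * a = c * a) : b = c := by
  obtain ⟨u, rfl⟩ := T.exists_word b
  obtain ⟨v, rfl⟩ := T.exists_word c
  obtain ⟨w, rfl⟩ := T.exists_word a
  have h1 : T.mkW (u ++ w) = T.mkW (v ++ w) := by
    rw [T.mkW_append, T.mkW_append, h]
  rw [T.mkW_reverse_iff] at h1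
  simp only [List.reverse_append] at h1
  rw [(T.op).mkW_append, (T.op).mkW_append] at h1
  have h2 := (T.op).mul_left_cancel' _ _ _ h1
  rw [(T.op).mkW_reverse_iff] at h2
  simp only [List.reverse_reverse] at h2
  exact h2

end TrickleGraph
namespace TrickleGraph

variable {V : Type u} [PartialOrder V] (T : TrickleGraph V)

theorem len_gen (x : V) : T.len (T.mkW [x]) = 1 := by
  have := T.len_mkW [x]
  simpa using this

/-- If a product of elements of a set equals a generator, the generator is in the set. -/
theorem gen_mem_of_prod {x : V} {D : Set (TrickleMonoid T)} :
    ∀ l : List (TrickleMonoid T), (∀ a ∈ l, a ∈ D) → l.prod = T.mkW [x] →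
      T.mkW [x] ∈ D := by
  intro l
  induction l with
  | nil =>
    intro _ h
    rw [List.prod_nil] at h
    exact absurd h.symm (T.mkW_singleton_ne_one x)
  | cons a l ihl =>
    intro hmem hprod
    rw [List.prod_cons] at hprod
    have hlen : T.len a + T.len l.prod = 1 := by
      rw [← T.len_mul, hprod, T.len_gen]
    rcases Nat.eq_zero_or_pos (T.len a) with h0 | hpos
    · have ha1 : a = 1 := T.eq_one_of_len_eq_zero h0
      rw [ha1, one_mul] at hprod
      exact ihl (fun b hb => hmem b (List.mem_cons_of_mem a hb)) hprod
    · have h1 : T.len l.prod = 0 := by omega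
      have hl1 : l.prod = 1 := T.eq_one_of_len_eq_zero h1
      rw [hl1, mul_one] at hprod
      rw [← hprod]
      exact hmem a List.mem_cons_self

/-- In a Garside trickle monoid, every generator divides the Garside element. -/
theorem gen_dvdL_delta {Δ : TrickleMonoid T} (hclos : Submonoid.closure {a | DvdL a Δ} = ⊤)
    (x : V) : DvdL (T.mkW [x]) Δ := by
  have hx : T.mkW [x] ∈ Submonoid.closure {a : TrickleMonoid T | DvdL a Δ} := by
    rw [hclos]; trivial
  obtain ⟨l, hl, hprod⟩ := Submonoid.exists_list_of_mem_closure hx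
  exact T.gen_mem_of_prod l hl hprod

/-- The counting lemma: an element of length `n` is left-divisible by at most `n`
distinct generators. -/
theorem card_le_len : ∀ n : ℕ, ∀ m : TrickleMonoid T, ∀ S : Finset V, T.len m = n →
    (∀ x ∈ S, DvdL (T.mkW [x]) m) → S.card ≤ n := by
  intro n
  induction n with
  | zero =>
    intro m S hm hS
    suffices h : S = ∅ by simp [h]
    rw [Finset.eq_empty_iff_forall_notMem]
    intro x hx
    obtain ⟨c, hc⟩ := hS x hx
    have := T.len_mul (T.mkW [x]) c
    rw [hc, hm, T.len_gen] at this
    omega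
  | succ k ih =>
    intro m S hm hS
    rcases S.eq_empty_or_nonempty with rfl | ⟨x₁, hx₁⟩
    · simp
    obtain ⟨m', hm'⟩ := hS x₁ hx₁
    have hlenm' : T.len m' = k := by
      have := T.len_mul (T.mkW [x₁]) m'
      rw [hm', hm, T.len_gen] at this
      omega
    set S' := (S.erase x₁).image (T.rho x₁) with hS'
    have hdvd : ∀ z ∈ S', DvdL (T.mkW [z]) m' := by
      intro z hz
      rw [hS', Finset.mem_image] at hz
      obtain ⟨y, hy, rfl⟩ := hz
      have hyne : y ≠ x₁ := Finset.ne_of_mem_erase hy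
      obtain ⟨d, hd⟩ := hS y (Finset.mem_of_mem_erase hy)
      have heq : T.mkW [x₁] * m' = T.mkW [y] * d := by rw [hm', hd]
      obtain ⟨-, e, he, -⟩ := T.levi_monoid (Ne.symm hyne) heq
      exact ⟨e, he.symm⟩
    have hcard : S'.card = S.card - 1 := by
      rw [hS', Finset.card_image_of_injective _ (T.rho_injective x₁),
        Finset.card_erase_of_mem hx₁]
    have := ih m' S' hlenm' hdvd
    have hpos : 1 ≤ S.card := Finset.card_pos.2 ⟨x₁, hx₁⟩
    omega

/-- Forward direction of Theorem 2.15. -/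
theorem forward (h : IsGarsideMonoid (TrickleMonoid T)) :
    Finite V ∧ ∀ x y : V, x ≠ y → T.graph.Adj x y := by
  obtain ⟨hpre, Δ, hbal, hclos⟩ := h
  have hgen : ∀ x : V, DvdL (T.mkW [x]) Δ := T.gen_dvdL_delta hclos
  constructor
  · by_contra hinf
    rw [not_finite_iff_infinite] at hinf
    obtain ⟨S, hS⟩ := Infinite.exists_subset_card_eq V (T.len Δ + 1)
    have := T.card_le_len (T.len Δ) Δ S rfl (fun x _ => hgen x)
    omega
  · intro x y hne
    obtain ⟨c, hc⟩ := hgen x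
    obtain ⟨d, hd⟩ := hgen y
    have heq : T.mkW [x] * c = T.mkW [y] * d := by rw [hc, hd]
    exact (T.levi_monoid hne heq).1

end TrickleGraph
section DvdBasic

variable {M : Type*} [Monoid M]

theorem dvdL_refl (a : M) : DvdL a a := ⟨1, mul_one a⟩

theorem dvdL_trans {a b c : M} (h1 : DvdL a b) (h2 : DvdL b c) : DvdL a c := by
  obtain ⟨u, rfl⟩ := h1
  obtain ⟨v, rfl⟩ := h2
  exact ⟨u * v, (mul_assoc a u v).symm⟩


theorem one_dvdL (a : M) : DvdL 1 a := ⟨a, one_mul a⟩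

theorem dvdL_mul_right (a b : M) : DvdL a (a * b) := ⟨b, rfl⟩

theorem dvdL_mul_left_cong {b c : M} (a : M) (h : DvdL b c) : DvdL (a * b) (a * c) := by
  obtain ⟨u, rfl⟩ := h
  exact ⟨u, mul_assoc a b u⟩

end DvdBasic

namespace TrickleGraph

variable {V : Type u} [PartialOrder V] (T : TrickleGraph V)

theorem exists_gen_decomp {m : TrickleMonoid T} (h : m ≠ 1) :
    ∃ (y : V) (m' : TrickleMonoid T), m = T.mkW [y] * m' ∧ T.len m = T.len m' + 1 := by
  obtain ⟨l, rfl⟩ := T.exists_word m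
  cases l with
  | nil => exact absurd rfl h
  | cons y l' =>
    refine ⟨y, T.mkW l', by simpa using T.mkW_append [y] l', ?_⟩
    rw [T.len_mkW, T.len_mkW]
    simp

/-- Existence of the left lcm of a generator and an element (complete graph case). -/
theorem lcm_gen (hC : ∀ x y : V, x ≠ y → T.graph.Adj x y) :
    ∀ n : ℕ, ∀ m : TrickleMonoid T, T.len m ≤ n → ∀ x : V,
      ∃ l, IsLcmL (T.mkW [x]) m l := by
  intro n
  induction n with
  | zero =>
    intro m hm x
    have : m = 1 := T.eq_one_of_len_eq_zero (Nat.le_zero.1 hm)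
    subst this
    exact ⟨T.mkW [x], ⟨⟨dvdL_refl _, one_dvdL _⟩, fun c hc _ => hc⟩⟩
  | succ n ihn =>
    intro m hm x
    by_cases h1 : m = 1
    · subst h1
      exact ⟨T.mkW [x], ⟨⟨dvdL_refl _, one_dvdL _⟩, fun c hc _ => hc⟩⟩
    obtain ⟨y, m', hdec, hlen⟩ := T.exists_gen_decomp h1
    by_cases hxy : y = x
    · subst hxy
      refine ⟨m, ⟨⟨?_, dvdL_refl m⟩, fun c _ hc => hc⟩⟩
      rw [hdec]
      exact dvdL_mul_right _ _
    · have hadj : T.graph.Adj y x := hC y x hxy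
      have hlen' : T.len m' ≤ n := by omega
      obtain ⟨l', hl'⟩ := ihn m' hlen' (T.rho y x)
      refine ⟨T.mkW [y] * l', ⟨⟨?_, ?_⟩, ?_⟩⟩
      · -- x divides it
        obtain ⟨e, he⟩ := hl'.1.1
        refine ⟨T.mkW [T.rho x y] * e, ?_⟩
        rw [← mul_assoc, T.gen_pair_rel hadj.symm, mul_assoc, he]
      · rw [hdec]
        exact dvdL_mul_left_cong _ hl'.1.2
      · intro c hxc hmc
        obtain ⟨c₁, hc₁⟩ := hxc
        obtain ⟨d, hd⟩ := hmc
        have heq : T.mkW [x] * c₁ = T.mkW [y] * (m' * d) := by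
          rw [hc₁, ← mul_assoc, ← hdec, hd]
        obtain ⟨-, e, he1, he2⟩ := T.levi_monoid (Ne.symm hxy) heq
        have hrc : DvdL (T.mkW [T.rho y x]) (m' * d) := ⟨e, he2.symm⟩
        have hmc' : DvdL m' (m' * d) := dvdL_mul_right _ _
        obtain ⟨f, hf⟩ := hl'.2 (m' * d) hrc hmc'
        refine ⟨f, ?_⟩
        rw [mul_assoc, hf, ← mul_assoc, ← hdec, hd]

/-- Existence of left lcms (complete graph case). -/
theorem lcm_left (hC : ∀ x y : V, x ≠ y → T.graph.Adj x y) :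
    ∀ n : ℕ, ∀ a b : TrickleMonoid T, T.len a ≤ n → ∃ l, IsLcmL a b l := by
  intro n
  induction n with
  | zero =>
    intro a b ha
    have : a = 1 := T.eq_one_of_len_eq_zero (Nat.le_zero.1 ha)
    subst this
    exact ⟨b, ⟨⟨one_dvdL b, dvdL_refl b⟩, fun c _ hc => hc⟩⟩
  | succ n ihn =>
    intro a b ha
    by_cases h1 : a = 1
    · subst h1
      exact ⟨b, ⟨⟨one_dvdL b, dvdL_refl b⟩, fun c _ hc => hc⟩⟩
    obtain ⟨x, a', hdec, hlen⟩ := T.exists_gen_decomp h1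
    obtain ⟨m₂, hm₂⟩ := T.lcm_gen hC (T.len b) b le_rfl x
    obtain ⟨btil, hbtil⟩ := hm₂.1.1
    obtain ⟨l', hl'⟩ := ihn a' btil (by omega)
    refine ⟨T.mkW [x] * l', ⟨⟨?_, ?_⟩, ?_⟩⟩
    · rw [hdec]
      exact dvdL_mul_left_cong _ hl'.1.1
    · refine dvdL_trans hm₂.1.2 ?_
      rw [← hbtil]
      exact dvdL_mul_left_cong _ hl'.1.2
    · intro c hac hbc
      obtain ⟨ca, hca⟩ := hac
      obtain ⟨cm, hcm⟩ := hm₂.2 c (by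
        refine dvdL_trans ?_ ⟨ca, hca⟩
        rw [hdec]; exact dvdL_mul_right _ _) hbc
      rw [← hbtil, mul_assoc] at hcm
      rw [hdec, mul_assoc] at hca
      have hc1 : DvdL a' (btil * cm) := by
        refine ⟨ca, T.cancel_gen (x := x) ?_⟩
        rw [hca, ← hcm]
      obtain ⟨f, hf⟩ := hl'.2 (btil * cm) hc1 (dvdL_mul_right _ _)
      refine ⟨f, ?_⟩
      rw [mul_assoc, hf, ← hcm]

end TrickleGraph
namespace TrickleGraph

variable {V : Type u} [PartialOrder V] (T : TrickleGraph V)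

/-- A chosen word representing an element. -/
noncomputable def wrd (m : TrickleMonoid T) : List V := (T.exists_word m).choose

theorem wrd_spec (m : TrickleMonoid T) : m = T.mkW (T.wrd m) := (T.exists_word m).choose_spec

/-- The reversal anti-isomorphism to the opposite trickle monoid. -/
noncomputable def oprev (m : TrickleMonoid T) : TrickleMonoid T.op :=
  (T.op).mkW (T.wrd m).reverse

theorem oprev_mkW (l : List V) : T.oprev (T.mkW l) = (T.op).mkW l.reverse :=
  (T.mkW_reverse_iff).1 (T.wrd_spec (T.mkW l)).symm

theorem oprev_mul (a b : TrickleMonoid T) : T.oprev (a * b) = T.oprev b * T.oprev a := by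
  have ha := T.wrd_spec a
  have hb := T.wrd_spec b
  have h1 : a * b = T.mkW (T.wrd a ++ T.wrd b) := by
    rw [T.mkW_append, ← ha, ← hb]
  rw [h1, T.oprev_mkW, List.reverse_append, (T.op).mkW_append, ← T.oprev_mkW,
    ← T.oprev_mkW, ← ha, ← hb]

theorem oprev_injective {a b : TrickleMonoid T} (h : T.oprev a = T.oprev b) : a = b := by
  rw [T.wrd_spec a, T.wrd_spec b]
  exact (T.mkW_reverse_iff).2 h

theorem oprev_surjective (m' : TrickleMonoid T.op) : ∃ a, T.oprev a = m' := by
  obtain ⟨l, rfl⟩ := (T.op).exists_word m'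
  exact ⟨T.mkW l.reverse, by rw [T.oprev_mkW, List.reverse_reverse]⟩

theorem dvdR_iff_oprev (a b : TrickleMonoid T) :
    DvdR a b ↔ DvdL (T.oprev a) (T.oprev b) := by
  constructor
  · rintro ⟨c, rfl⟩
    exact ⟨T.oprev c, (T.oprev_mul c a).symm⟩
  · rintro ⟨c', hc⟩
    obtain ⟨c, rfl⟩ := T.oprev_surjective c'
    refine ⟨c, T.oprev_injective ?_⟩
    rw [T.oprev_mul]
    exact hc

/-- Existence of right lcms (complete graph case). -/
theorem lcm_right (hC : ∀ x y : V, x ≠ y → T.graph.Adj x y) (a b : TrickleMonoid T) :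
    ∃ l, IsLcmR a b l := by
  have hC' : ∀ x y : V, x ≠ y → (T.op).graph.Adj x y := hC
  obtain ⟨l', hl'⟩ := (T.op).lcm_left hC' ((T.op).len (T.oprev a)) (T.oprev a) (T.oprev b) le_rfl
  obtain ⟨m, rfl⟩ := T.oprev_surjective l'
  refine ⟨m, ⟨⟨?_, ?_⟩, ?_⟩⟩
  · exact (T.dvdR_iff_oprev a m).2 hl'.1.1
  · exact (T.dvdR_iff_oprev b m).2 hl'.1.2
  · intro c hac hbc
    exact (T.dvdR_iff_oprev m c).2 (hl'.2 (T.oprev c)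
      ((T.dvdR_iff_oprev a c).1 hac) ((T.dvdR_iff_oprev b c).1 hbc))

end TrickleGraph
namespace TrickleGraph

variable {V : Type u} [PartialOrder V] (T : TrickleGraph V)

/-- Existence of a least common multiple of all the generators. -/
theorem exists_delta (hfin : Finite V) (hC : ∀ x y : V, x ≠ y → T.graph.Adj x y) :
    ∃ Δ : TrickleMonoid T, (∀ x : V, DvdL (T.mkW [x]) Δ) ∧
      ∀ c, (∀ x : V, DvdL (T.mkW [x]) c) → DvdL Δ c := by
  have : Fintype V := Fintype.ofFinite V
  have key : ∀ l : List V, ∃ D : TrickleMonoid T,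
      (∀ x ∈ l, DvdL (T.mkW [x]) D) ∧
      ∀ c, (∀ x ∈ l, DvdL (T.mkW [x]) c) → DvdL D c := by
    intro l
    induction l with
    | nil => exact ⟨1, fun x hx => absurd hx List.not_mem_nil, fun c _ => one_dvdL c⟩
    | cons a l ihl =>
      obtain ⟨D', hD'1, hD'2⟩ := ihl
      obtain ⟨D, hD⟩ := T.lcm_left hC (T.len (T.mkW [a])) (T.mkW [a]) D' le_rfl
      refine ⟨D, ?_, ?_⟩
      · intro x hx
        rcases List.mem_cons.1 hx with rfl | hx'
        · exact hD.1.1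
        · exact dvdL_trans (hD'1 x hx') hD.1.2
      · intro c hc
        exact hD.2 c (hc a List.mem_cons_self)
          (hD'2 c (fun x hx => hc x (List.mem_cons_of_mem a hx)))
  obtain ⟨D, hD1, hD2⟩ := key Finset.univ.toList
  exact ⟨D, fun x => hD1 x (Finset.mem_toList.2 (Finset.mem_univ x)),
    fun c hc => hD2 c (fun x _ => hc x)⟩

theorem delta_sigma (hC : ∀ x y : V, x ≠ y → T.graph.Adj x y) {Δ : TrickleMonoid T}
    (hall : ∀ x : V, DvdL (T.mkW [x]) Δ)
    (hleast : ∀ c, (∀ x : V, DvdL (T.mkW [x]) c) → DvdL Δ c) (x : V) :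
    ∃ x' : V, T.mkW [x] * Δ = Δ * T.mkW [x'] := by
  have hdvd : DvdL Δ (T.mkW [x] * Δ) := by
    apply hleast
    intro y
    by_cases hxy : y = x
    · subst hxy; exact ⟨Δ, rfl⟩
    · obtain ⟨e, he⟩ := hall (T.rho x y)
      refine ⟨T.mkW [T.rho y x] * e, ?_⟩
      rw [← mul_assoc, T.gen_pair_rel (hC y x hxy), mul_assoc, he]
  obtain ⟨c, hc⟩ := hdvd
  have hlen : T.len c = 1 := by
    have h1 := T.len_mul Δ c
    have h2 := T.len_mul (T.mkW [x]) Δ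
    rw [hc, T.len_gen] at *
    omega
  obtain ⟨l, rfl⟩ := T.exists_word c
  rw [T.len_mkW] at hlen
  obtain ⟨x', rfl⟩ := List.length_eq_one_iff.1 hlen
  exact ⟨x', hc.symm⟩

theorem div_closure {Δ : TrickleMonoid T}
    (hsig : ∀ z : V, ∃ z' : V, T.mkW [z] * Δ = Δ * T.mkW [z']) {z : V} {b : TrickleMonoid T}
    (h : DvdL (T.mkW [z] * b) Δ) : DvdL b Δ := by
  obtain ⟨d, hd⟩ := h
  obtain ⟨z', hz'⟩ := hsig z
  -- Δ = mkW [z] * (b * d)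
  have hΔ : Δ = T.mkW [z] * (b * d) := by rw [← hd, mul_assoc]
  -- Δ * mkW [z'] = mkW [z] * Δ = mkW [z] * ((b * d) * mkW [z'])
  have h2 : T.mkW [z] * ((b * d) * T.mkW [z']) = T.mkW [z] * Δ := by
    rw [← mul_assoc, ← hΔ, hz']
  have h3 : (b * d) * T.mkW [z'] = Δ := T.cancel_gen h2
  exact ⟨d * T.mkW [z'], by rw [← mul_assoc, h3]⟩

theorem divR_le_divL {Δ : TrickleMonoid T}
    (hsig : ∀ z : V, ∃ z' : V, T.mkW [z] * Δ = Δ * T.mkW [z']) :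
    ∀ n : ℕ, ∀ c a : TrickleMonoid T, T.len c ≤ n → Δ = c * a → DvdL a Δ := by
  intro n
  induction n with
  | zero =>
    intro c a hc ha
    have : c = 1 := T.eq_one_of_len_eq_zero (Nat.le_zero.1 hc)
    subst this
    rw [one_mul] at ha
    exact ha ▸ dvdL_refl a
  | succ n ihn =>
    intro c a hc ha
    by_cases h1 : c = 1
    · subst h1; rw [one_mul] at ha; exact ha ▸ dvdL_refl a
    · obtain ⟨l, rfl⟩ := T.exists_word c
      have hl : l ≠ [] := fun hnil => h1 (by rw [hnil]; rfl)
      obtain ⟨l', z, hlc⟩ := l.eq_nil_or_concat.resolve_left hl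
      rw [List.concat_eq_append] at hlc
      subst hlc
      have hsplit : T.mkW (l' ++ [z]) = T.mkW l' * T.mkW [z] := T.mkW_append l' [z]
      have hlen' : T.len (T.mkW l') ≤ n := by
        have := T.len_mkW (l' ++ [z])
        have h2 := T.len_mkW l'
        simp only [List.length_append, List.length_cons, List.length_nil] at this
        omega
      have ha' : Δ = T.mkW l' * (T.mkW [z] * a) := by
        rw [← mul_assoc, ← hsplit, ha]
      exact T.div_closure hsig (ihn (T.mkW l') (T.mkW [z] * a) hlen' ha')

omit T in
theorem finite_words (hfin : Finite V) (N : ℕ) : {l : List V | l.length ≤ N}.Finite := by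
  induction N with
  | zero =>
    apply Set.Finite.subset (Set.finite_singleton ([] : List V))
    intro l hl
    simp only [Set.mem_setOf_eq, Nat.le_zero, List.length_eq_zero_iff] at hl
    simp [hl]
  | succ n ihn =>
    apply Set.Finite.subset (Set.Finite.insert ([] : List V)
      (Set.Finite.image2 List.cons Set.finite_univ ihn))
    intro l hl
    cases l with
    | nil => exact Set.mem_insert _ _
    | cons a l' =>
      apply Set.mem_insert_of_mem
      refine Set.mem_image2_of_mem (Set.mem_univ a) ?_
      simp only [Set.mem_setOf_eq, List.length_cons] at hl ⊢
      omega

theorem finite_len_le (hfin : Finite V) (N : ℕ) :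
    {m : TrickleMonoid T | T.len m ≤ N}.Finite := by
  apply Set.Finite.subset ((finite_words (V := V) hfin N).image T.mkW)
  intro m hm
  refine ⟨T.wrd m, ?_, (T.wrd_spec m).symm⟩
  have := T.len_mkW (T.wrd m)
  rw [← T.wrd_spec m] at this
  simp only [Set.mem_setOf_eq] at hm ⊢
  omega

theorem delta_balanced (hfin : Finite V) {Δ : TrickleMonoid T}
    (hsig : ∀ z : V, ∃ z' : V, T.mkW [z] * Δ = Δ * T.mkW [z']) :
    {a : TrickleMonoid T | DvdL a Δ} = {a : TrickleMonoid T | DvdR a Δ} := by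
  have hRL : {a : TrickleMonoid T | DvdR a Δ} ⊆ {a : TrickleMonoid T | DvdL a Δ} := by
    rintro a ⟨c, hc⟩
    exact T.divR_le_divL hsig (T.len c) c a le_rfl hc.symm
  have hfinL : {a : TrickleMonoid T | DvdL a Δ}.Finite := by
    apply Set.Finite.subset (T.finite_len_le hfin (T.len Δ))
    rintro a ⟨c, hc⟩
    have := T.len_mul a c
    rw [hc] at this
    simp only [Set.mem_setOf_eq]
    omega
  classical
  set F : TrickleMonoid T → TrickleMonoid T :=
    fun a => if h : DvdL a Δ then h.choose else 1 with hF
  have hspec : ∀ a, ∀ h : DvdL a Δ, a * F a = Δ := by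
    intro a h
    simp only [hF]
    rw [dif_pos h]
    exact h.choose_spec
  have hmaps : ∀ a ∈ {a : TrickleMonoid T | DvdL a Δ},
      F a ∈ {a : TrickleMonoid T | DvdR a Δ} :=
    fun a ha => ⟨a, hspec a ha⟩
  have hinj : Set.InjOn F {a : TrickleMonoid T | DvdL a Δ} := by
    intro a ha b hb hab
    have hsa := hspec a ha
    have hsb := hspec b hb
    rw [← hab] at hsb
    exact T.mul_right_cancel' (F a) a b (hsa.trans hsb.symm)
  have hcard := Set.ncard_le_ncard_of_injOn F hmaps hinj (hfinL.subset hRL)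
  exact (Set.eq_of_subset_of_ncard_le hRL hcard hfinL).symm

/-- Backward direction of Theorem 2.15. -/
theorem backward (hfin : Finite V) (hC : ∀ x y : V, x ≠ y → T.graph.Adj x y) :
    IsGarsideMonoid (TrickleMonoid T) := by
  obtain ⟨Δ, hall, hleast⟩ := T.exists_delta hfin hC
  have hsig := T.delta_sigma hC hall hleast
  refine ⟨⟨?_, ⟨T.len, ?_, ?_⟩, ?_, ?_⟩, Δ, ?_, ?_⟩
  · -- cancellative
    intro a b c d h
    have h1 : c * a = c * b := T.mul_right_cancel' d _ _ h
    exact T.mul_left_cancel' c a b h1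
  · intro a
    constructor
    · exact fun h => T.eq_one_of_len_eq_zero h
    · rintro rfl; exact T.len_one
  · intro a b
    exact le_of_eq (T.len_mul a b).symm
  · intro a b _
    exact T.lcm_left hC (T.len a) a b le_rfl
  · intro a b _
    exact T.lcm_right hC a b
  · exact T.delta_balanced hfin hsig
  · rw [eq_top_iff, ← PresentedMonoid.closure_range_of T.monRels]
    apply Submonoid.closure_mono
    rintro _ ⟨x, rfl⟩
    exact hall x

end TrickleGraph

/-- **Theorem 2.15.** For a preGarside trickle graph `Γ` (i.e. `mu x = ∞` for every vertex),
the preGarside trickle monoid `Tr⁺(Γ)` is a Garside monoid if and only if the vertex set is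
finite and the graph is complete. -/
theorem TrickleMonoid.isGarside_iff {V : Type u} [PartialOrder V] (T : TrickleGraph V)
    (hmu : ∀ x : V, T.mu x = ⊤) :
    IsGarsideMonoid (TrickleMonoid T) ↔
      (Finite V ∧ ∀ x y : V, x ≠ y → T.graph.Adj x y) := by
  constructor
  · exact fun h => T.forward h
  · rintro ⟨hfin, hC⟩
    exact T.backward hfin hC
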